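/- The map sending a strongly irreducible ideal I to H(I) = {J ∈ S(M) : I ⊆ J} restricts to a bijection between the set of minimal elements of S(M) (strongly irreducible ideals of M that contain no strictly smaller strongly irreducible ideal) and the set of irreducible components of the terminal space S(M) (maximal irreducible subsets of the terminal space). -/
import Mathlib


/-- An ideal of a commutative monoid `M`: a subset closed under
multiplication by arbitrary elements of `M`. -/
def IsIdealM {M : Type*} [CommMonoid M] (I : Set M) : Prop :=
  ∀ x ∈ I, ∀ m : M, x * m ∈ I

/-- A strongly irreducible ideal: a proper ideal `I` such that for all ideals
`J`, `K`, if `J ∩ K ⊆ I` then `J ⊆ I` or `K ⊆ I`. -/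
def IsStronglyIrr {M : Type*} [CommMonoid M] (I : Set M) : Prop :=
  IsIdealM I ∧ I ≠ Set.univ ∧
    ∀ J K : Set M, IsIdealM J → IsIdealM K → J ∩ K ⊆ I → J ⊆ I ∨ K ⊆ I

/-- A prime ideal of a commutative monoid. -/
def IsPrimeIdealM {M : Type*} [CommMonoid M] (P : Set M) : Prop :=
  IsIdealM P ∧ P ≠ Set.univ ∧ ∀ x y : M, x * y ∈ P → x ∈ P ∨ y ∈ P

/-- A maximal ideal of a commutative monoid: a proper ideal maximal among
proper ideals. -/
def IsMaximalIdealM {M : Type*} [CommMonoid M] (I : Set M) : Prop :=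
  IsIdealM I ∧ I ≠ Set.univ ∧
    ∀ J : Set M, IsIdealM J → J ≠ Set.univ → I ⊆ J → J = I

/-- `SIr M` is the set (type) of strongly irreducible ideals of `M`. -/
structure SIr (M : Type*) [CommMonoid M] where
  carrier : Set M
  strongly_irr : IsStronglyIrr carrier

namespace SIr

variable {M : Type*} [CommMonoid M]

@[ext] theorem ext {I J : SIr M} (h : I.carrier = J.carrier) : I = J := by
  cases I; cases J; simpa using h

/-- `KK X = ⋂_{I ∈ X} I`, the kernel of a set of strongly irreducible ideals. -/
def KK (X : Set (SIr M)) : Set M := ⋂ I ∈ X, I.carrier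

/-- The hull-kernel operator `HK`: for nonempty `X`,
`HK X = {J ∈ S(M) : K(X) ⊆ J}`, and `HK ∅ = ∅`. -/
def HK (X : Set (SIr M)) : Set (SIr M) :=
  {J : SIr M | X.Nonempty ∧ KK X ⊆ J.carrier}

theorem HK_empty : HK (∅ : Set (SIr M)) = ∅ := by
  ext J
  simp [HK, Set.not_nonempty_empty]

theorem mem_HK_of_nonempty {X : Set (SIr M)} (hX : X.Nonempty) {J : SIr M} :
    J ∈ HK X ↔ KK X ⊆ J.carrier :=
  ⟨fun h => h.2, fun h => ⟨hX, h⟩⟩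

theorem KK_antitone {X X' : Set (SIr M)} (h : X ⊆ X') : KK X' ⊆ KK X := by
  intro m hm
  simp only [KK, Set.mem_iInter] at hm ⊢
  exact fun I hI => hm I (h hI)

theorem KK_isIdeal (X : Set (SIr M)) : IsIdealM (KK X) := by
  intro x hx m
  simp only [KK, Set.mem_iInter] at hx ⊢
  exact fun I hI => I.strongly_irr.1 x (hx I hI) m

theorem subset_HK (X : Set (SIr M)) : X ⊆ HK X := by
  intro J hJ
  refine ⟨⟨J, hJ⟩, fun m hm => ?_⟩
  simp only [KK, Set.mem_iInter] at hm
  exact hm J hJ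

theorem HK_mono {X X' : Set (SIr M)} (h : X ⊆ X') : HK X ⊆ HK X' := by
  rintro J ⟨hne, hsub⟩
  exact ⟨hne.mono h, (KK_antitone h).trans hsub⟩

theorem HK_idem (X : Set (SIr M)) : HK (HK X) = HK X := by
  refine Set.Subset.antisymm ?_ (subset_HK _)
  rintro J ⟨hne, hsub⟩
  obtain ⟨I, hI⟩ := hne
  refine ⟨hI.1, Set.Subset.trans ?_ hsub⟩
  intro m hm
  simp only [KK, Set.mem_iInter]
  exact fun L hL => hL.2 hm

theorem HK_union (X X' : Set (SIr M)) : HK (X ∪ X') = HK X ∪ HK X' := by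
  rcases X.eq_empty_or_nonempty with rfl | hX
  · rw [Set.empty_union, HK_empty, Set.empty_union]
  rcases X'.eq_empty_or_nonempty with rfl | hX'
  · rw [Set.union_empty, HK_empty, Set.union_empty]
  refine Set.Subset.antisymm ?_
    (Set.union_subset (HK_mono Set.subset_union_left)
      (HK_mono Set.subset_union_right))
  rintro J ⟨-, hsub⟩
  have hKK : KK X ∩ KK X' ⊆ J.carrier := by
    refine Set.Subset.trans ?_ hsub
    intro m hm
    simp only [KK, Set.mem_iInter, Set.mem_inter_iff] at hm ⊢
    rintro I (hI | hI)
    · exact hm.1 I hI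
    · exact hm.2 I hI
  rcases J.strongly_irr.2.2 (KK X) (KK X') (KK_isIdeal X) (KK_isIdeal X') hKK with h | h
  · exact Or.inl ⟨hX, h⟩
  · exact Or.inr ⟨hX', h⟩

/-- The terminal-space (Zariski) topology on `SIr M`: the closed sets are
exactly the sets of the form `HK X`. -/
instance instTopologicalSpace : TopologicalSpace (SIr M) :=
  TopologicalSpace.ofClosed (Set.range HK)
    ⟨∅, HK_empty⟩
    (fun A hA => by
      refine ⟨⋂₀ A, Set.Subset.antisymm (Set.subset_sInter fun C hC => ?_) (subset_HK _)⟩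
      obtain ⟨Y, hY⟩ := hA hC
      calc HK (⋂₀ A) ⊆ HK C := HK_mono (Set.sInter_subset_of_mem hC)
        _ = HK (HK Y) := by rw [hY]
        _ = HK Y := HK_idem Y
        _ = C := hY)
    (fun A hA B hB => by
      obtain ⟨Y, hY⟩ := hA
      obtain ⟨Z, hZ⟩ := hB
      exact ⟨Y ∪ Z, by rw [HK_union, hY, hZ]⟩)

theorem isClosed_iff {C : Set (SIr M)} : IsClosed C ↔ ∃ X, HK X = C := by
  rw [← isOpen_compl_iff]
  show Cᶜᶜ ∈ Set.range HK ↔ _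
  rw [compl_compl]
  exact Iff.rfl

end SIr


namespace SIr

variable {M : Type*} [CommMonoid M]

/-- Any proper ideal extends to a strongly irreducible ideal avoiding a given
element outside it. -/
theorem exists_sirr {J : Set M} (hJ : IsIdealM J) {x : M} (hx : x ∉ J) :
    ∃ P : SIr M, J ⊆ P.carrier ∧ x ∉ P.carrier := by
  have := zorn_subset_nonempty {K : Set M | IsIdealM K ∧ J ⊆ K ∧ x ∉ K}
    (fun c hc hchain hcne => by
      refine ⟨⋃₀ c, ⟨?_, ?_, ?_⟩, fun s hs => Set.subset_sUnion_of_mem hs⟩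
      · rintro y ⟨s, hs, hys⟩ m
        exact ⟨s, hs, (hc hs).1 y hys m⟩
      · obtain ⟨s, hs⟩ := hcne
        exact (hc hs).2.1.trans (Set.subset_sUnion_of_mem hs)
      · rintro ⟨s, hs, hxs⟩
        exact (hc hs).2.2 hxs) J ⟨hJ, Set.Subset.rfl, hx⟩
  obtain ⟨P, hJP, hPmem, hPmax⟩ := this
  obtain ⟨hPid, -, hxP⟩ := hPmem
  have key : ∀ a : M, a ∉ P → ∃ m : M, x = a * m := by
    intro a haP
    set Q := P ∪ {y | ∃ m : M, y = a * m} with hQ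
    have hQid : IsIdealM Q := by
      rintro y (hy | ⟨m, rfl⟩) n
      · exact Or.inl (hPid y hy n)
      · exact Or.inr ⟨m * n, mul_assoc a m n⟩
    by_cases hxQ : x ∈ Q
    · rcases hxQ with h | ⟨m, hm⟩
      · exact absurd h hxP
      · exact ⟨m, hm⟩
    · exfalso
      have : Q ⊆ P := hPmax ⟨hQid, hJP.trans Set.subset_union_left, hxQ⟩
        Set.subset_union_left
      exact haP (this (Or.inr ⟨1, (mul_one a).symm⟩))
  refine ⟨⟨P, hPid, ?_, ?_⟩, hJP, hxP⟩
  · intro h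
    exact hxP (h ▸ Set.mem_univ x)
  · intro A B hA hB hAB
    by_contra hcon
    push_neg at hcon
    obtain ⟨a, haA, haP⟩ := Set.not_subset.1 hcon.1
    obtain ⟨b, hbB, hbP⟩ := Set.not_subset.1 hcon.2
    obtain ⟨m, hm⟩ := key a haP
    obtain ⟨n, hn⟩ := key b hbP
    exact hxP (hAB ⟨hm ▸ hA a haA m, hn ▸ hB b hbB n⟩)

/-- The "hull" of an arbitrary ideal is closed. -/
theorem isClosed_H (J : Set M) : IsClosed {L : SIr M | J ⊆ L.carrier} := by
  rw [isClosed_iff]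
  rcases Set.eq_empty_or_nonempty {L : SIr M | J ⊆ L.carrier} with he | hne
  · exact ⟨∅, by rw [HK_empty, he]⟩
  · refine ⟨{L : SIr M | J ⊆ L.carrier}, Set.Subset.antisymm ?_ (subset_HK _)⟩
    rintro L ⟨-, hL⟩
    refine Set.Subset.trans ?_ hL
    intro y hy
    simp only [KK, Set.mem_iInter]
    exact fun P hP => hP hy
  
theorem KK_H (I : SIr M) : KK {J : SIr M | I.carrier ⊆ J.carrier} = I.carrier := by
  refine Set.Subset.antisymm ?_ ?_
  · intro y hy
    by_contra hyI
    obtain ⟨P, hIP, hyP⟩ := exists_sirr I.strongly_irr.1 hyI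
    simp only [KK, Set.mem_iInter] at hy
    exact hyP (hy P hIP)
  · intro y hy
    simp only [KK, Set.mem_iInter]
    exact fun P hP => hP hy

theorem closure_eq (Y : Set (SIr M)) : closure Y = HK Y := by
  refine Set.Subset.antisymm
    (closure_minimal (subset_HK Y) (isClosed_iff.2 ⟨Y, rfl⟩)) ?_
  obtain ⟨X, hX⟩ := isClosed_iff.1 (isClosed_closure (s := Y))
  calc HK Y ⊆ HK (HK X) := HK_mono (hX ▸ subset_closure)
    _ = HK X := HK_idem X
    _ = closure Y := hX

theorem H_irreducible (I : SIr M) :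
    IsIrreducible {J : SIr M | I.carrier ⊆ J.carrier} := by
  have h : {J : SIr M | I.carrier ⊆ J.carrier} = closure {I} := by
    rw [closure_eq]
    ext J
    simp only [HK, KK, Set.mem_singleton_iff, Set.iInter_iInter_eq_left,
      Set.mem_setOf_eq]
    exact ⟨fun h => ⟨Set.singleton_nonempty I, h⟩, fun h => h.2⟩
  rw [h]
  exact isIrreducible_singleton.closure

theorem closed_irr (C : Set (SIr M)) (hC : IsClosed C) (hCirr : IsIrreducible C) :
    IsStronglyIrr (KK C) ∧ C = {J : SIr M | KK C ⊆ J.carrier} := by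
  obtain ⟨I0, hI0⟩ := hCirr.1
  have hKKI0 : KK C ⊆ I0.carrier := by
    intro y hy
    simp only [KK, Set.mem_iInter] at hy
    exact hy I0 hI0
  have hCeq : C = {J : SIr M | KK C ⊆ J.carrier} := by
    obtain ⟨X, hX⟩ := isClosed_iff.1 hC
    have hXne : X.Nonempty := by
      by_contra h
      rw [Set.not_nonempty_iff_eq_empty.1 h, HK_empty] at hX
      exact hCirr.1.ne_empty hX.symm
    have hKK : KK C = KK X := by
      refine Set.Subset.antisymm ((KK_antitone (hX ▸ subset_HK X))) ?_
      intro y hy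
      simp only [KK, Set.mem_iInter]
      intro J hJ
      rw [← hX] at hJ
      exact hJ.2 hy
    ext J
    simp only [Set.mem_setOf_eq]
    rw [hKK, ← hX, mem_HK_of_nonempty hXne]
  refine ⟨⟨KK_isIdeal C, ?_, ?_⟩, hCeq⟩
  · intro h
    exact I0.strongly_irr.2.1 (Set.eq_univ_of_univ_subset (h ▸ hKKI0))
  · intro A B hA hB hAB
    have hsub : C ⊆ {L : SIr M | A ⊆ L.carrier} ∪ {L : SIr M | B ⊆ L.carrier} := by
      intro L hL
      have : A ∩ B ⊆ L.carrier := hAB.trans (by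
        intro y hy
        simp only [KK, Set.mem_iInter] at hy
        exact hy L hL)
      exact L.strongly_irr.2.2 A B hA hB this
    rcases (isPreirreducible_iff_isClosed_union_isClosed.1 hCirr.2) _ _
        (isClosed_H A) (isClosed_H B) hsub with h | h
    · refine Or.inl fun y hy => ?_
      simp only [KK, Set.mem_iInter]
      exact fun J hJ => h hJ hy
    · refine Or.inr fun y hy => ?_
      simp only [KK, Set.mem_iInter]
      exact fun J hJ => h hJ hy

end SIr

/-- `I ↦ H(I) = {J ∈ S(M) : I ⊆ J}` is a bijection from the set
of minimal strongly irreducible ideals onto the set of irreducible components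
of the terminal space. -/
theorem minimal_bijOn_irreducibleComponents (M : Type*) [CommMonoid M] :
    Set.BijOn (fun I : SIr M => {J : SIr M | I.carrier ⊆ J.carrier})
      {I : SIr M | ∀ J : SIr M, J.carrier ⊆ I.carrier → J = I}
      (irreducibleComponents (SIr M)) := by
  classical
  constructor
  · -- MapsTo
    intro I hI
    refine ⟨SIr.H_irreducible I, fun t ht hst => ?_⟩
    have hcl : IsIrreducible (closure t) := ht.closure
    have hclosed : IsClosed (closure t) := isClosed_closure
    obtain ⟨hQ, hQeq⟩ := SIr.closed_irr _ hclosed hcl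
    have hmono : {J : SIr M | I.carrier ⊆ J.carrier} ⊆ closure t :=
      hst.trans subset_closure
    have hQI : SIr.KK (closure t) ⊆ I.carrier := by
      have := SIr.KK_antitone hmono
      rw [SIr.KK_H] at this
      exact this
    have : (⟨SIr.KK (closure t), hQ⟩ : SIr M) = I := hI _ hQI
    have hcarrier : SIr.KK (closure t) = I.carrier := congrArg SIr.carrier this
    intro J hJ
    have : J ∈ closure t := subset_closure hJ
    rw [hQeq, Set.mem_setOf_eq, hcarrier] at this
    exact this
  constructor
  · -- InjOn
    intro I hI J hJ hIJ
    have : SIr.KK {L : SIr M | I.carrier ⊆ L.carrier} =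
        SIr.KK {L : SIr M | J.carrier ⊆ L.carrier} := by
      simp only at hIJ
      rw [hIJ]
    rw [SIr.KK_H, SIr.KK_H] at this
    exact SIr.ext this
  · -- SurjOn
    intro C hC
    have hclosed : IsClosed C := isClosed_of_mem_irreducibleComponents _ hC
    obtain ⟨hP, hPeq⟩ := SIr.closed_irr C hclosed hC.1
    refine ⟨⟨SIr.KK C, hP⟩, ?_, ?_⟩
    · intro J hJsub
      have hsub : C ⊆ {L : SIr M | J.carrier ⊆ L.carrier} := by
        rw [hPeq]
        intro L hL
        exact hJsub.trans hL
      have hmax : {L : SIr M | J.carrier ⊆ L.carrier} ⊆ C :=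
        hC.2 (SIr.H_irreducible J) hsub
      have hCeq : C = {L : SIr M | J.carrier ⊆ L.carrier} :=
        Set.Subset.antisymm hsub hmax
      refine SIr.ext ?_
      show J.carrier = SIr.KK C
      rw [hCeq, SIr.KK_H]
    · simp only
      exact hPeq.symm
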